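/- Let D > 1, let F be the distribution supported in [1, D] (in fact a bounded distribution), and let Δ_{N,m}^worst(c) denote the worst-case incentive-awareness measure of ERM^c under F. Then for all integers N, m with 1 ≤ m ≤ N/(2D) (in particular whenever m = o(√N)) and every c with m/N ≤ c ≤ 1/(2D): Δ_{N,m}^worst(c) = Δ_{N,m}^worst(m/N). That is, for bounded distributions the worst-case incentive-awareness measure of ERM^c is identical for every c in the stated range. -/

import Mathlib

open MeasureTheory ProbabilityTheory Filter

noncomputable section

noncomputable def sortedVal {N : ℕ} (v : Fin N → ℝ) (i : ℕ) : ℝ :=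
  (Multiset.sort (↑(List.ofFn v)) (· ≤ ·)).getD (N - i) 0

noncomputable def argmaxIdx (S : Finset ℕ) (f : ℕ → ℝ) : ℕ :=
  WithBot.unbotD 0 ((S.filter fun i => ∀ j ∈ S, f j ≤ f i).max)

noncomputable def ERMIdx (c : ℝ) {N : ℕ} (v : Fin N → ℝ) : ℕ :=
  argmaxIdx ((Finset.Icc 1 N).filter fun i => c * N < (i : ℝ))
    (fun i => (i : ℝ) * sortedVal v i)

noncomputable def ERM (c : ℝ) {N : ℕ} (v : Fin N → ℝ) : ℝ :=
  sortedVal v (ERMIdx c v)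

/-- Incentive-awareness measure `δ_I(v_I, v_{-I})` of a price function `P`,
where the coordinates in `I` are the manipulable ones and `v` records both
`v_I` (on `I`) and `v_{-I}` (off `I`). -/
noncomputable def deltaIdx {N : ℕ} (P : (Fin N → ℝ) → ℝ) (I : Finset (Fin N))
    (v : Fin N → ℝ) : ℝ :=
  1 - sInf {p : ℝ | ∃ b : Fin N → ℝ, (∀ j, 0 ≤ b j) ∧
      p = P fun j => if j ∈ I then b j else v j} / P v

/-- Worst-case incentive-awareness measure `δ_m^worst(v_{-I})`
(only the coordinates of `v` off `I` matter). -/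
noncomputable def deltaWorstIdx {N : ℕ} (P : (Fin N → ℝ) → ℝ) (I : Finset (Fin N))
    (v : Fin N → ℝ) : ℝ :=
  sSup {x : ℝ | ∃ u : Fin N → ℝ, (∀ j, 0 ≤ u j) ∧
      x = deltaIdx P I fun j => if j ∈ I then u j else v j}

/-- `Δ_{N,m}^worst` with explicit index set `I`:
expectation of `δ^worst(v_{-I})` over i.i.d. samples from `μ`. -/
noncomputable def DeltaWorstIdx {N : ℕ} (μ : Measure ℝ) (P : (Fin N → ℝ) → ℝ)
    (I : Finset (Fin N)) : ℝ :=
  ∫ v : Fin N → ℝ, deltaWorstIdx P I v ∂(Measure.pi fun _ => μ)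

/-- The index set `{0, …, m-1}` inside `Fin N`. -/
noncomputable def firstIdx (N m : ℕ) : Finset (Fin N) :=
  Finset.univ.filter fun j => (j : ℕ) < m

/-- The worst-case incentive-awareness measure `Δ_{N,m}^worst`. -/
noncomputable def DeltaWorst {N : ℕ} (μ : Measure ℝ) (P : (Fin N → ℝ) → ℝ) (m : ℕ) : ℝ :=
  DeltaWorstIdx μ P (firstIdx N m)

/-- Append-based incentive-awareness measure `δ_I(v_I, v_{-I})` for `P = ERM^c`. -/
noncomputable def deltaIA (c : ℝ) {m n : ℕ} (vI : Fin m → ℝ) (w : Fin n → ℝ) : ℝ :=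
  1 - sInf {p : ℝ | ∃ b : Fin m → ℝ, (∀ i, 0 ≤ b i) ∧ p = ERM c (Fin.append b w)} /
      ERM c (Fin.append vI w)

/-- Append-based worst-case incentive-awareness measure `δ_m^worst(v_{-I})` for `P = ERM^c`. -/
noncomputable def deltaWorstA (c : ℝ) (m : ℕ) {n : ℕ} (w : Fin n → ℝ) : ℝ :=
  sSup {x : ℝ | ∃ vI : Fin m → ℝ, (∀ i, 0 ≤ vI i) ∧ x = deltaIA c vI w}

/-- The index `k* = argmax_{i > cN} i·v_i` selected by `ERM^c` when the top `m`
of the `N` samples are fixed to `+∞` and the remaining `N - m` samples are `w`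
(so `v_i` for `i > m` is the `(i-m)`-th largest entry of `w`);
ties are broken towards the larger index. -/
noncomputable def kStarInf (c : ℝ) (N m : ℕ) {n : ℕ} (w : Fin n → ℝ) : ℕ :=
  argmaxIdx ((Finset.Icc (m + 1) N).filter fun i => c * N < (i : ℝ))
    (fun i => (i : ℝ) * sortedVal w (i - m))

/-- Interim utility `u^K(v, p)` of a bidder with value `v` in a second price
auction with reserve price `p` among `K` i.i.d. bidders from `μ`. -/
noncomputable def uK (μ : Measure ℝ) (K : ℕ) (v p : ℝ) : ℝ :=
  ∫ x : Fin (K - 1) → ℝ, max (v - (List.ofFn x).foldr max p) 0 ∂(Measure.pi fun _ => μ)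

/-- A distribution on `[0, ∞)` has monotone hazard rate (MHR) if it has a density `f`
whose hazard rate `f v / (1 - F v)` is non-decreasing on its support. -/
def IsMHR (μ : Measure ℝ) : Prop :=
  ∃ f : ℝ → ℝ, (∀ x, 0 ≤ f x) ∧ (∀ x, x < 0 → f x = 0) ∧
    μ = MeasureTheory.volume.withDensity (fun x => ENNReal.ofReal (f x)) ∧
    MonotoneOn (fun v => f v / (1 - ProbabilityTheory.cdf μ v)) (Function.support f)

/-- `α`-strong regularity: a density `f`, positive on an interval support contained
in `[0, ∞)`, whose virtual value `φ(x) = x - (1 - F x)/f x` satisfies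
`φ(y) - φ(x) ≥ α (y - x)` whenever `x < y` on the support. -/
def IsAlphaStronglyRegular (α : ℝ) (μ : Measure ℝ) : Prop :=
  ∃ f : ℝ → ℝ, (∀ x, 0 ≤ f x) ∧
    μ = MeasureTheory.volume.withDensity (fun x => ENNReal.ofReal (f x)) ∧
    Set.OrdConnected (Function.support f) ∧
    (∀ x ∈ Function.support f, 0 ≤ x) ∧
    (∀ x ∈ Function.support f, ∀ y ∈ Function.support f, x < y →
      α * (y - x) ≤
        (y - (1 - ProbabilityTheory.cdf μ y) / f y) -
          (x - (1 - ProbabilityTheory.cdf μ x) / f x))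

end


section AuxERM

open Classical in
private lemma count_high (l : List ℝ) (hl : l.Pairwise (· ≤ ·)) (k : ℕ)
    (hk : k < l.length) (D : ℝ) (hD : D < l[k]) :
    l.length - k ≤ Multiset.countP (fun a : ℝ => D < a) ↑l := by
  rw [Multiset.coe_countP]
  have h2 : l.countP (fun a => decide (D < a))
      = (l.take k).countP (fun a => decide (D < a))
        + (l.drop k).countP (fun a => decide (D < a)) := by
    conv_lhs => rw [← List.take_append_drop k l]
    rw [List.countP_append]
  have h3 : (l.drop k).countP (fun a => decide (D < a)) = (l.drop k).length := by
    rw [List.countP_eq_length]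
    intro a ha
    obtain ⟨j, hj, rfl⟩ := List.mem_iff_getElem.mp ha
    rw [List.getElem_drop]
    simp only [decide_eq_true_iff]
    refine lt_of_lt_of_le hD ?_
    have hj' : k + j < l.length := by
      have := hj; simp [List.length_drop] at this; omega
    rcases Nat.eq_zero_or_pos j with h | h
    · subst h; simp
    · exact ((List.pairwise_iff_getElem.mp hl) k (k + j) hk hj' (by omega))
  rw [h2, h3, List.length_drop]
  omega

open Classical in
private lemma count_low (l : List ℝ) (hl : l.Pairwise (· ≤ ·)) (k : ℕ)
    (hk : k < l.length) (h1 : l[k] < 1) :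
    k + 1 ≤ Multiset.countP (fun a : ℝ => a < 1) ↑l := by
  rw [Multiset.coe_countP]
  have h2 : l.countP (fun a => decide (a < 1))
      = (l.take (k+1)).countP (fun a => decide (a < 1))
        + (l.drop (k+1)).countP (fun a => decide (a < 1)) := by
    conv_lhs => rw [← List.take_append_drop (k+1) l]
    rw [List.countP_append]
  have h3 : (l.take (k+1)).countP (fun a => decide (a < 1)) = (l.take (k+1)).length := by
    rw [List.countP_eq_length]
    intro a ha
    obtain ⟨j, hj, rfl⟩ := List.mem_iff_getElem.mp ha
    rw [List.getElem_take]
    simp only [decide_eq_true_iff]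
    have hjk : j ≤ k := by simp [List.length_take] at hj; omega
    refine lt_of_le_of_lt ?_ h1
    rcases eq_or_lt_of_le hjk with h | h
    · subst h; simp
    · exact ((List.pairwise_iff_getElem.mp hl) j k (by omega) hk h)
  rw [h2, h3, List.length_take]
  omega

open Classical in
private lemma countP_ofFn_eq {N : ℕ} (x : Fin N → ℝ) (p : ℝ → Prop) :
    Multiset.countP p ↑(List.ofFn x) = (Finset.univ.filter fun j => p (x j)).card := by
  rw [List.ofFn_eq_map, ← Multiset.map_coe, Multiset.countP_map]
  rfl

open Classical in
private lemma card_filter_lt_le {N m : ℕ} (q : Fin N → Prop)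
    (h : ∀ j : Fin N, q j → (j : ℕ) < m) :
    (Finset.univ.filter fun j => q j).card ≤ m := by
  calc (Finset.univ.filter fun j => q j).card
      ≤ (Finset.range m).card :=
        Finset.card_le_card_of_injOn (fun j => (j : ℕ))
          (fun a ha => by
            have ha' : q a := by simpa using ha
            simpa using h a ha')
          (fun a _ b _ hab => Fin.ext hab)
    _ = m := Finset.card_range m

open Classical in
private lemma sortedVal_bounds {D : ℝ} {N m : ℕ} (hD : 1 < D) (hmN : m < N)
    (x : Fin N → ℝ) (hx : ∀ j : Fin N, ¬((j : ℕ) < m) → x j ∈ Set.Icc (1 : ℝ) D) :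
    (∀ i, m < i → i ≤ N → sortedVal x i ≤ D) ∧ 1 ≤ sortedVal x (N - m) := by
  set l : List ℝ := Multiset.sort (↑(List.ofFn x)) (· ≤ ·) with hl
  have hlen : l.length = N := by
    rw [hl, Multiset.length_sort]; simp
  have hsort : l.Pairwise (· ≤ ·) := Multiset.pairwise_sort _ _
  have hcoe : (↑l : Multiset ℝ) = ↑(List.ofFn x) := Multiset.sort_eq _ _
  have chigh : Multiset.countP (fun a : ℝ => D < a) ↑l ≤ m := by
    rw [hcoe, countP_ofFn_eq]
    refine card_filter_lt_le _ fun j hj => ?_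
    by_contra hc
    exact absurd (hx j hc).2 (not_le.mpr hj)
  have clow : Multiset.countP (fun a : ℝ => a < 1) ↑l ≤ m := by
    rw [hcoe, countP_ofFn_eq]
    refine card_filter_lt_le _ fun j hj => ?_
    by_contra hc
    exact absurd (hx j hc).1 (not_le.mpr hj)
  constructor
  · intro i hi1 hi2
    have hk : N - i < l.length := by omega
    show l.getD (N - i) 0 ≤ D
    rw [List.getD_eq_getElem l 0 hk]
    by_contra hcon
    push_neg at hcon
    have := count_high l hsort (N - i) hk D hcon
    omega
  · have hkeq : N - (N - m) = m := by omega
    have hk : m < l.length := by omega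
    show (1:ℝ) ≤ l.getD (N - (N - m)) 0
    rw [hkeq, List.getD_eq_getElem l 0 hk]
    by_contra hcon
    push_neg at hcon
    have := count_low l hsort m hk hcon
    omega

private lemma argmaxIdx_congr (Sc S0 : Finset ℕ) (f : ℕ → ℝ) (k : ℕ)
    (hsub : Sc ⊆ S0) (hk : k ∈ Sc)
    (hkey : ∀ i ∈ S0, i ∉ Sc → f i < f k) :
    argmaxIdx Sc f = argmaxIdx S0 f := by
  have hfilter : (Sc.filter fun i => ∀ j ∈ Sc, f j ≤ f i)
      = (S0.filter fun i => ∀ j ∈ S0, f j ≤ f i) := by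
    ext i
    simp only [Finset.mem_filter]
    constructor
    · rintro ⟨hiSc, hmax⟩
      refine ⟨hsub hiSc, fun j hj => ?_⟩
      by_cases hjc : j ∈ Sc
      · exact hmax j hjc
      · exact le_of_lt (lt_of_lt_of_le (hkey j hj hjc) (hmax _ hk))
    · rintro ⟨hiS0, hmax⟩
      have hiSc : i ∈ Sc := by
        by_contra hc'
        exact absurd (hmax _ (hsub hk)) (not_le.mpr (hkey i hiS0 hc'))
      exact ⟨hiSc, fun j hj => hmax j (hsub hj)⟩
  unfold argmaxIdx
  rw [hfilter]

set_option maxHeartbeats 1000000 in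
private lemma ERM_eq_aux (D : ℝ) (hD : 1 < D) (N m : ℕ) (hm1 : 1 ≤ m)
    (hm2 : (m : ℝ) ≤ (N : ℝ) / (2 * D)) (c : ℝ) (hc1 : (m : ℝ) / N ≤ c)
    (hc2 : c ≤ 1 / (2 * D))
    (x : Fin N → ℝ) (hx : ∀ j : Fin N, ¬((j : ℕ) < m) → x j ∈ Set.Icc (1 : ℝ) D) :
    ERM c x = ERM ((m : ℝ) / N) x := by
  have hD0 : (0:ℝ) < D := lt_trans one_pos hD
  have h2D : (0:ℝ) < 2 * D := by linarith
  have hmR : (1:ℝ) ≤ (m:ℝ) := by exact_mod_cast hm1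
  have hNge : (m:ℝ) * (2 * D) ≤ N := (le_div_iff₀ h2D).mp hm2
  have hNR : (2:ℝ) < N := by nlinarith
  have hN0 : (0:ℝ) < N := by linarith
  have hmhalf : (m:ℝ) < (N:ℝ) / 2 := by nlinarith
  have hmN : m < N := by
    have : (m:ℝ) < N := by nlinarith
    exact_mod_cast this
  have hcNle : c * N ≤ (N:ℝ) / 2 := by
    have h1 : c * N ≤ (1 / (2 * D)) * N := by nlinarith
    have h12 : 1 / (2 * D) ≤ 1 / 2 := by
      rw [div_le_div_iff₀ h2D two_pos]; linarith
    have h2 : (1 / (2 * D)) * N ≤ (N:ℝ) / 2 := by nlinarith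
    linarith
  have hmcN : (m:ℝ) ≤ c * N := by
    have := (div_le_iff₀ hN0).mp hc1
    linarith
  have hNmgt : (N:ℝ) / 2 < ((N - m : ℕ) : ℝ) := by
    rw [Nat.cast_sub (le_of_lt hmN)]
    linarith
  obtain ⟨hub, hlb⟩ := sortedVal_bounds hD hmN x hx
  have hmn : ((m:ℝ)/N) * N = (m:ℝ) := div_mul_cancel₀ _ (ne_of_gt hN0)
  have hfNm : ((N - m : ℕ) : ℝ) ≤ ((N - m : ℕ) : ℝ) * sortedVal x (N - m) := by
    have h1 : ((N - m : ℕ) : ℝ) * 1 ≤ ((N - m : ℕ) : ℝ) * sortedVal x (N - m) :=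
      mul_le_mul_of_nonneg_left hlb (by positivity)
    rwa [mul_one] at h1
  show sortedVal x (ERMIdx c x) = sortedVal x (ERMIdx ((m:ℝ)/N) x)
  congr 1
  unfold ERMIdx
  apply argmaxIdx_congr _ _ _ (N - m)
  · intro i hi
    simp only [Finset.mem_filter, Finset.mem_Icc] at hi ⊢
    refine ⟨hi.1, ?_⟩
    rw [hmn]
    exact lt_of_le_of_lt hmcN hi.2
  · simp only [Finset.mem_filter, Finset.mem_Icc]
    refine ⟨⟨by omega, by omega⟩, lt_of_le_of_lt hcNle hNmgt⟩
  · intro i hi hni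
    simp only [Finset.mem_filter, Finset.mem_Icc, hmn] at hi hni
    have hmi : m < i := by exact_mod_cast hi.2
    have hiN : i ≤ N := hi.1.2
    have hni' : ¬ (c * N < (i : ℝ)) := fun hlt => hni ⟨hi.1, hlt⟩
    push_neg at hni'
    have hub' := hub i hmi hiN
    have h1 : (i:ℝ) * sortedVal x i ≤ (i : ℝ) * D :=
      mul_le_mul_of_nonneg_left hub' (by positivity)
    have h2 : (i : ℝ) * D ≤ c * N * D := by nlinarith
    have h3 : c * N * D ≤ (N:ℝ) / 2 := by
      have : c * D ≤ 1 / 2 := by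
        calc c * D ≤ (1 / (2 * D)) * D := by nlinarith
          _ = 1 / 2 := by field_simp
      nlinarith
    calc (i:ℝ) * sortedVal x i ≤ (N:ℝ)/2 := by linarith
      _ < ((N - m : ℕ) : ℝ) := hNmgt
      _ ≤ ((N - m : ℕ) : ℝ) * sortedVal x (N - m) := hfNm

end AuxERM

open MeasureTheory ProbabilityTheory in
/-- Proposition on the choice of `c`, bounded case. For a
distribution supported in `[1, D]` and integers `1 ≤ m ≤ N/(2D)`, the worst-case
incentive-awareness measure of `ERM^c` is the same for every `c` in the range
`[m/N, 1/(2D)]`: `Δ_{N,m}^worst(c) = Δ_{N,m}^worst(m/N)`. -/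
theorem DeltaWorst_independent_of_c_bounded (D : ℝ) (hD : 1 < D)
    (μ : Measure ℝ) (hμ : IsProbabilityMeasure μ) (hsupp : μ (Set.Icc 1 D)ᶜ = 0)
    (N m : ℕ) (hm1 : 1 ≤ m) (hm2 : (m : ℝ) ≤ (N : ℝ) / (2 * D))
    (c : ℝ) (hc1 : (m : ℝ) / N ≤ c) (hc2 : c ≤ 1 / (2 * D)) :
    DeltaWorst μ (fun v : Fin N → ℝ => ERM c v) m =
      DeltaWorst μ (fun v : Fin N → ℝ => ERM ((m : ℝ) / N) v) m := by
  have key : ∀ x : Fin N → ℝ, (∀ j : Fin N, ¬((j : ℕ) < m) → x j ∈ Set.Icc (1:ℝ) D) →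
      ERM c x = ERM ((m : ℝ) / N) x :=
    fun x hx => ERM_eq_aux D hD N m hm1 hm2 c hc1 hc2 x hx
  unfold DeltaWorst DeltaWorstIdx
  apply integral_congr_ae
  have hae : ∀ᵐ v : Fin N → ℝ ∂(Measure.pi fun _ => μ), ∀ j, v j ∈ Set.Icc (1:ℝ) D := by
    rw [ae_all_iff]
    intro j
    rw [ae_iff]
    have h0 : (fun _ : Fin N => μ) j ((Set.Icc (1:ℝ) D)ᶜ) = 0 := hsupp
    exact Measure.pi_eval_preimage_null (fun _ : Fin N => μ) h0
  filter_upwards [hae] with v hv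
  have hgoodvec : ∀ w : Fin N → ℝ, (∀ j, j ∉ firstIdx N m → w j = v j) →
      ERM c w = ERM ((m : ℝ) / N) w := by
    intro w hw
    apply key
    intro j hj
    have hj' : j ∉ firstIdx N m := by simp [firstIdx, hj]
    rw [hw j hj']
    exact hv j
  have hdelta : ∀ u : Fin N → ℝ,
      deltaIdx (fun w : Fin N → ℝ => ERM c w) (firstIdx N m)
        (fun j => if j ∈ firstIdx N m then u j else v j)
      = deltaIdx (fun w : Fin N → ℝ => ERM ((m:ℝ)/N) w) (firstIdx N m)
        (fun j => if j ∈ firstIdx N m then u j else v j) := by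
    intro u
    have hden : ERM c (fun j => if j ∈ firstIdx N m then u j else v j)
        = ERM ((m:ℝ)/N) (fun j => if j ∈ firstIdx N m then u j else v j) := by
      apply hgoodvec
      intro j hj
      simp [hj]
    have harg : ∀ b : Fin N → ℝ,
        ERM c (fun j => if j ∈ firstIdx N m then b j
          else if j ∈ firstIdx N m then u j else v j)
        = ERM ((m:ℝ)/N) (fun j => if j ∈ firstIdx N m then b j
          else if j ∈ firstIdx N m then u j else v j) := by
      intro b
      apply hgoodvec
      intro j hj
      simp [hj]
    have hset : {p : ℝ | ∃ b : Fin N → ℝ, (∀ j, 0 ≤ b j) ∧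
          p = ERM c fun j => if j ∈ firstIdx N m then b j
            else if j ∈ firstIdx N m then u j else v j}
        = {p : ℝ | ∃ b : Fin N → ℝ, (∀ j, 0 ≤ b j) ∧
          p = ERM ((m:ℝ)/N) fun j => if j ∈ firstIdx N m then b j
            else if j ∈ firstIdx N m then u j else v j} := by
      ext p
      constructor
      · rintro ⟨b, hb, rfl⟩
        exact ⟨b, hb, harg b⟩
      · rintro ⟨b, hb, rfl⟩
        exact ⟨b, hb, (harg b).symm⟩
    simp only [deltaIdx]
    rw [hset, hden]
  unfold deltaWorstIdx
  congr 1
  ext y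
  constructor
  · rintro ⟨u, hu, rfl⟩
    exact ⟨u, hu, hdelta u⟩
  · rintro ⟨u, hu, rfl⟩
    exact ⟨u, hu, (hdelta u).symm⟩
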